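/- If A is an invertible m×m dual quaternion matrix and λ is a right eigenvalue of A with appreciable right eigenvector x, then λ is invertible and λ^{-1} is a right eigenvalue of A^{-1} with the same eigenvector x: A^{-1} x = x λ^{-1}. -/
import Mathlib


open TrivSqZeroExt DualNumber

/-- If `A` is invertible and `λ` is a right eigenvalue of `A` with appreciable eigenvector `x`,
then `λ` is invertible and `A⁻¹ x = x λ⁻¹`. -/
theorem rightEigenvalue_inv {m : ℕ}
    (A : Matrix (Fin m) (Fin m) (DualNumber (Quaternion ℝ))) (hA : IsUnit A)
    (x : Fin m → DualNumber (Quaternion ℝ)) (lam : DualNumber (Quaternion ℝ))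
    (hx : (fun i => (x i).fst) ≠ 0)
    (heig : A.mulVec x = fun i => x i * lam) :
    IsUnit lam ∧
      ∀ B : Matrix (Fin m) (Fin m) (DualNumber (Quaternion ℝ)),
        A * B = 1 → B * A = 1 → B.mulVec x = fun i => x i * Ring.inverse lam := by
  obtain ⟨u, hu⟩ := hA
  have hBA : (u⁻¹).val * A = 1 := by
    rw [← hu]; exact u.inv_mul
  -- key: x = (B.mulVec x) * lam for any left inverse B
  have key : ∀ B : Matrix (Fin m) (Fin m) (DualNumber (Quaternion ℝ)),
      B * A = 1 → ∀ i, x i = (B.mulVec x) i * lam := by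
    intro B hB i
    have h1 : B.mulVec (A.mulVec x) = x := by
      rw [Matrix.mulVec_mulVec, hB, Matrix.one_mulVec]
    rw [heig] at h1
    have h2 : B.mulVec (fun i => x i * lam) i = (B.mulVec x) i * lam := by
      simp [Matrix.mulVec, dotProduct, Finset.sum_mul, mul_assoc]
    rw [← h2, h1]
  -- λ is a unit
  have hlamfst : lam.fst ≠ 0 := by
    intro h0
    apply hx
    funext i
    have := key (u⁻¹).val hBA i
    have := congrArg TrivSqZeroExt.fst this
    rw [fst_mul, h0, mul_zero] at this
    simpa using this
  have hlam : IsUnit lam := by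
    rw [isUnit_iff_isUnit_fst, isUnit_iff_ne_zero]
    exact hlamfst
  refine ⟨hlam, fun B hAB hBA' => ?_⟩
  funext i
  have h := key B hBA' i
  have := congrArg (· * Ring.inverse lam) h
  simpa [mul_assoc, Ring.mul_inverse_cancel lam hlam] using this.symm
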